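/- Let P(θ), θ ∈ ℝ, be a family of probability distributions on ℝ whose t-th moment is, for every relevant t, a polynomial of degree exactly t in θ: E_{x∼P(θ)}[xᵗ] = Σ_{i=1}^{t+1} β_{t,i} θ^{i−1} with β_{t,t+1} ≠ 0, and with all required absolute moments finite. Let V = {v^{(1)},…,v^{(ℓ)}} and V' = {w^{(1)},…,w^{(ℓ)}} be multisets of ℓ vectors in ℝⁿ, each generating a mixture as follows: choose j uniformly from [ℓ] and draw the coordinates of x independently with x_i ∼ P(v^{(j)}_i) (respectively x_i ∼ P(w^{(j)}_i)). Fix a subset C ⊆ [n] and a tuple t = (t_i)_{i∈C} of non-negative integers. If the mixture moments E[∏_{i∈C} x_i^{u_i}] agree for the two mixtures for every tuple u with u_i ≤ t_i for all i ∈ C, then Σ_{j=1}^{ℓ} ∏_{i∈C} (v^{(j)}_i)^{u_i} = Σ_{j=1}^{ℓ} ∏_{i∈C} (w^{(j)}_i)^{u_i} for every such tuple u. -/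

import Mathlib

open MeasureTheory

lemma pi_helper_mmdps (n : ℕ) (P : ℝ → Measure ℝ) [∀ θ, IsProbabilityMeasure (P θ)]
    (θ : Fin n → ℝ) (C : Finset (Fin n)) (u : Fin n → ℕ) :
    (∫ x : Fin n → ℝ, ∏ i ∈ C, (x i) ^ (u i) ∂(Measure.pi fun i => P (θ i)))
      = ∏ i ∈ C, ∫ x, x ^ (u i) ∂(P (θ i)) := by
  classical
  have hpow : ∀ (y : ℝ) (i : Fin n),
      y ^ (if i ∈ C then u i else 0) = if i ∈ C then y ^ (u i) else 1 := by
    intro y i; split_ifs <;> simp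
  have hext : ∀ x : Fin n → ℝ, (∏ i ∈ C, (x i) ^ (u i))
      = ∏ i : Fin n, (x i) ^ (if i ∈ C then u i else 0) := by
    intro x
    simp_rw [hpow]
    rw [Finset.prod_ite_mem, Finset.univ_inter]
  simp_rw [hext]
  have key := MeasureTheory.integral_fintype_prod_eq_prod (𝕜 := ℝ) (ι := Fin n) (E := fun _ => ℝ)
      (fun i y => y ^ (if i ∈ C then u i else 0)) (μ := fun i => P (θ i))
  have h1 : (∫ x : Fin n → ℝ, ∏ i : Fin n, (x i) ^ (if i ∈ C then u i else 0)
        ∂(Measure.pi fun i => P (θ i)))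
      = ∏ i : Fin n, ∫ y : ℝ, y ^ (if i ∈ C then u i else 0) ∂(P (θ i)) := key
  rw [h1]
  have h2 : ∀ i : Fin n, (∫ y : ℝ, y ^ (if i ∈ C then u i else 0) ∂(P (θ i)))
      = if i ∈ C then ∫ y, y ^ (u i) ∂(P (θ i)) else 1 := by
    intro i; split_ifs <;> simp
  simp_rw [h2]
  rw [Finset.prod_ite_mem, Finset.univ_inter]

lemma pi_integrable_mmdps (n : ℕ) (P : ℝ → Measure ℝ) [∀ θ, IsProbabilityMeasure (P θ)]
    (hint : ∀ θ t, Integrable (fun x : ℝ => x ^ t) (P θ))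
    (θ : Fin n → ℝ) (C : Finset (Fin n)) (u : Fin n → ℕ) :
    Integrable (fun x : Fin n → ℝ => ∏ i ∈ C, (x i) ^ (u i))
      (Measure.pi fun i => P (θ i)) := by
  classical
  have hpow : ∀ (y : ℝ) (i : Fin n),
      y ^ (if i ∈ C then u i else 0) = if i ∈ C then y ^ (u i) else 1 := by
    intro y i; split_ifs <;> simp
  have hext : ∀ x : Fin n → ℝ, (∏ i ∈ C, (x i) ^ (u i))
      = ∏ i : Fin n, (x i) ^ (if i ∈ C then u i else 0) := by
    intro x
    simp_rw [hpow]
    rw [Finset.prod_ite_mem, Finset.univ_inter]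
  simp_rw [hext]
  exact MeasureTheory.Integrable.fintype_prod_dep (𝕜 := ℝ) (ι := Fin n) (E := fun _ => ℝ)
      (f := fun i y => y ^ (if i ∈ C then u i else 0)) (μ := fun i => P (θ i))
      (fun i => hint (θ i) _)

lemma expand_helper_mmdps (n ℓ : ℕ) (β : ℕ → ℕ → ℝ) (C : Finset (Fin n)) (u : Fin n → ℕ)
    (v : Fin ℓ → Fin n → ℝ) :
    (∑ j : Fin ℓ, ∏ i ∈ C, (∑ k ∈ Finset.range (u i + 1), β (u i) k * (v j i) ^ k))
      = ∑ p ∈ C.pi (fun i => Finset.range (u i + 1)),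
          (∏ x ∈ C.attach, β (u x.1) (p x.1 x.2)) *
            ∑ j : Fin ℓ, ∏ i ∈ C, (v j i) ^ (if h : i ∈ C then p i h else 0) := by
  classical
  have hj : ∀ j : Fin ℓ, (∏ i ∈ C, (∑ k ∈ Finset.range (u i + 1), β (u i) k * (v j i) ^ k))
      = ∑ p ∈ C.pi (fun i => Finset.range (u i + 1)),
          (∏ x ∈ C.attach, β (u x.1) (p x.1 x.2)) *
            ∏ i ∈ C, (v j i) ^ (if h : i ∈ C then p i h else 0) := by
    intro j
    rw [Finset.prod_sum]
    refine Finset.sum_congr rfl (fun p hp => ?_)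
    rw [Finset.prod_mul_distrib]
    congr 1
    rw [← Finset.prod_attach C (fun i => (v j i) ^ (if h : i ∈ C then p i h else 0))]
    refine Finset.prod_congr rfl (fun x _ => ?_)
    rw [dif_pos x.2]
  simp_rw [hj]
  rw [Finset.sum_comm]
  exact Finset.sum_congr rfl (fun p _ => (Finset.mul_sum _ _ _).symm)

lemma powersum_helper_mmdps (n ℓ : ℕ) (β : ℕ → ℕ → ℝ) (htop : ∀ t, β t t ≠ 0)
    (v w : Fin ℓ → Fin n → ℝ) (C : Finset (Fin n)) (t : Fin n → ℕ)
    (key : ∀ u : Fin n → ℕ, (∀ i ∈ C, u i ≤ t i) →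
      (∑ j : Fin ℓ, ∏ i ∈ C, (∑ k ∈ Finset.range (u i + 1), β (u i) k * (v j i) ^ k))
        = ∑ j : Fin ℓ, ∏ i ∈ C, (∑ k ∈ Finset.range (u i + 1), β (u i) k * (w j i) ^ k)) :
    ∀ u : Fin n → ℕ, (∀ i ∈ C, u i ≤ t i) →
      (∑ j : Fin ℓ, ∏ i ∈ C, (v j i) ^ (u i))
        = ∑ j : Fin ℓ, ∏ i ∈ C, (w j i) ^ (u i) := by
  classical
  have main : ∀ N : ℕ, ∀ u : Fin n → ℕ, (∀ i ∈ C, u i ≤ t i) → (∑ i ∈ C, u i) < N →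
      (∑ j : Fin ℓ, ∏ i ∈ C, (v j i) ^ (u i))
        = ∑ j : Fin ℓ, ∏ i ∈ C, (w j i) ^ (u i) := by
    intro N
    induction N with
    | zero => intro u hu hlt; omega
    | succ N IH =>
      intro u hu hlt
      have hk := key u hu
      rw [expand_helper_mmdps, expand_helper_mmdps] at hk
      set F := C.pi (fun i => Finset.range (u i + 1)) with hF
      set ptop : (a : Fin n) → a ∈ C → ℕ := fun i _ => u i with hptop
      have hmem : ptop ∈ F := by
        rw [Finset.mem_pi]
        intro i hi
        exact Finset.self_mem_range_succ (u i)
      rw [← Finset.add_sum_erase F _ hmem, ← Finset.add_sum_erase F _ hmem] at hk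
      have hlow : ∀ p ∈ F.erase ptop,
          ((∏ x ∈ C.attach, β (u x.1) (p x.1 x.2)) *
            ∑ j : Fin ℓ, ∏ i ∈ C, (v j i) ^ (if h : i ∈ C then p i h else 0))
            = (∏ x ∈ C.attach, β (u x.1) (p x.1 x.2)) *
            ∑ j : Fin ℓ, ∏ i ∈ C, (w j i) ^ (if h : i ∈ C then p i h else 0) := by
        intro p hp
        obtain ⟨hne, hpF⟩ := Finset.mem_erase.mp hp
        rw [Finset.mem_pi] at hpF
        have hle : ∀ i ∈ C, (if h : i ∈ C then p i h else 0) ≤ u i := by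
          intro i hi
          rw [dif_pos hi]
          exact Nat.lt_succ_iff.mp (Finset.mem_range.mp (hpF i hi))
        have hex : ∃ i ∈ C, (if h : i ∈ C then p i h else 0) < u i := by
          by_contra hc
          push_neg at hc
          apply hne
          funext i hi
          have h1 := hle i hi
          have h2 := hc i hi
          rw [dif_pos hi] at h1 h2
          show p i hi = u i
          omega
        obtain ⟨i₀, hi₀, hlt₀⟩ := hex
        have hsum : (∑ i ∈ C, (if h : i ∈ C then p i h else 0)) < ∑ i ∈ C, u i :=
          Finset.sum_lt_sum hle ⟨i₀, hi₀, hlt₀⟩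
        congr 1
        exact IH _ (fun i hi => le_trans (hle i hi) (hu i hi))
          (lt_of_lt_of_le hsum (Nat.lt_succ_iff.mp hlt))
      rw [Finset.sum_congr rfl hlow] at hk
      have hk2 := add_right_cancel hk
      have hc0 : (∏ x ∈ C.attach, β (u x.1) (ptop x.1 x.2)) ≠ 0 :=
        Finset.prod_ne_zero_iff.mpr (fun x _ => htop (u x.1))
      have hk3 := mul_left_cancel₀ hc0 hk2
      have hcv : ∀ (z : Fin ℓ → Fin n → ℝ) (j : Fin ℓ),
          (∏ i ∈ C, (z j i) ^ (if h : i ∈ C then ptop i h else 0))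
            = ∏ i ∈ C, (z j i) ^ (u i) :=
        fun z j => Finset.prod_congr rfl (fun i hi => by rw [dif_pos hi])
      simpa only [hcv] using hk3
  intro u hu
  exact main (∑ i ∈ C, u i + 1) u hu (Nat.lt_succ_self _)

theorem mixture_moments_determine_power_sums (n ℓ : ℕ) (P : ℝ → Measure ℝ)
    [∀ θ, IsProbabilityMeasure (P θ)]
    (β : ℕ → ℕ → ℝ) (htop : ∀ t, β t t ≠ 0)
    (hint : ∀ θ t, Integrable (fun x : ℝ => x ^ t) (P θ))
    (hmom : ∀ θ t, (∫ x, x ^ t ∂(P θ)) = ∑ i ∈ Finset.range (t + 1), β t i * θ ^ i)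
    (v w : Fin ℓ → Fin n → ℝ) (C : Finset (Fin n)) (t : Fin n → ℕ)
    (h : ∀ u : Fin n → ℕ, (∀ i ∈ C, u i ≤ t i) →
      (∫ x : Fin n → ℝ, ∏ i ∈ C, (x i) ^ (u i)
          ∂((ℓ : ENNReal)⁻¹ • ∑ j : Fin ℓ, Measure.pi fun i => P (v j i)))
        = ∫ x : Fin n → ℝ, ∏ i ∈ C, (x i) ^ (u i)
          ∂((ℓ : ENNReal)⁻¹ • ∑ j : Fin ℓ, Measure.pi fun i => P (w j i))) :
    ∀ u : Fin n → ℕ, (∀ i ∈ C, u i ≤ t i) →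
      (∑ j : Fin ℓ, ∏ i ∈ C, (v j i) ^ (u i))
        = ∑ j : Fin ℓ, ∏ i ∈ C, (w j i) ^ (u i) := by
  rcases Nat.eq_zero_or_pos ℓ with rfl | hl
  · intro u hu; simp
  have key : ∀ u : Fin n → ℕ, (∀ i ∈ C, u i ≤ t i) →
      (∑ j : Fin ℓ, ∏ i ∈ C, (∑ k ∈ Finset.range (u i + 1), β (u i) k * (v j i) ^ k))
        = ∑ j : Fin ℓ, ∏ i ∈ C, (∑ k ∈ Finset.range (u i + 1), β (u i) k * (w j i) ^ k) := by
    intro u hu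
    have hu' := h u hu
    rw [integral_smul_measure, integral_smul_measure,
      integral_finset_sum_measure (fun j _ => pi_integrable_mmdps n P hint (v j) C u),
      integral_finset_sum_measure (fun j _ => pi_integrable_mmdps n P hint (w j) C u)] at hu'
    simp_rw [pi_helper_mmdps n P] at hu'
    have hc : ((ℓ : ENNReal)⁻¹).toReal ≠ 0 := by
      rw [ENNReal.toReal_inv, ENNReal.toReal_natCast]
      exact inv_ne_zero (Nat.cast_ne_zero.mpr hl.ne')
    rw [smul_eq_mul, smul_eq_mul] at hu'
    have hu2 := mul_left_cancel₀ hc hu'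
    simp_rw [hmom] at hu2
    exact hu2
  exact powersum_helper_mmdps n ℓ β htop v w C t key
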